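/- arXiv:2505.05372 — 2 statements merged into one kernel-verified Lean document; each statement's English description precedes it below -/
import Mathlib

section
/- Spherical source locus moment integral: let χ(x) = C δ(|x| − R) be the uniform surface density on the sphere of radius R in ℝ³, let r ∈ ℝ³ with |r| < R, let x be a point on the sphere, θ̂ the unit vector from x toward r, and φ = ∠(O, x, r) the angle at x between the directions to the origin O and to r. Then (1/2) ∫_{-∞}^{∞} s² χ(r + s θ̂) ds = C R² (cos(2φ) + (|r|/R)²) / |cos φ|. -/
open MeasureTheory Real Set

/-- spherical source locus moment integral.  For the uniform surface
density `χ = C δ(|x| - R)` on the sphere of radius `R` in `ℝ³`, a point `r` with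
`|r| < R`, a source point `x` on the sphere, `θ̂ = (r - x)/|r - x|` and
`φ = ∠ O x r`, the line `{r + sθ̂}` meets the sphere at two points `r + sᵢθ̂` and
`(1/2)∫ s² χ(r + sθ̂) ds`, i.e. half the sum over the two intersection points of
`C sᵢ²/|θ̂·n̂(xᵢ)|` (with `n̂` the outward unit normal), equals
`C R² (cos 2φ + (|r|/R)²)/|cos φ|`. -/
theorem stmt_15 (R C : ℝ) (hR : 0 < R) (hC : 0 < C)
    (r x : EuclideanSpace ℝ (Fin 3)) (hr : ‖r‖ < R) (hx : ‖x‖ = R)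
    (θ : EuclideanSpace ℝ (Fin 3)) (hθ : θ = ‖r - x‖⁻¹ • (r - x))
    (φ : ℝ) (hφ : φ = InnerProductGeometry.angle ((0 : EuclideanSpace ℝ (Fin 3)) - x) (r - x))
    (s₁ s₂ : ℝ) (hs : s₁ ≠ s₂)
    (h₁ : ‖r + s₁ • θ‖ = R) (h₂ : ‖r + s₂ • θ‖ = R) :
    (1 / 2) * (C * s₁ ^ 2 / |(inner ℝ θ (R⁻¹ • (r + s₁ • θ)) : ℝ)| +
        C * s₂ ^ 2 / |(inner ℝ θ (R⁻¹ • (r + s₂ • θ)) : ℝ)|) =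
      C * R ^ 2 * (Real.cos (2 * φ) + (‖r‖ / R) ^ 2) / |Real.cos φ| := by
  have hrx : r - x ≠ 0 := by
    intro h
    rw [sub_eq_zero] at h
    rw [h, hx] at hr
    exact lt_irrefl R hr
  set L := ‖r - x‖ with hLdef
  have hL : 0 < L := norm_pos_iff.mpr hrx
  set n := ‖r‖ with hndef
  set b : ℝ := inner ℝ x r with hbdef
  set a : ℝ := inner ℝ θ r with hadef
  have hθn : ‖θ‖ = 1 := by
    rw [hθ, norm_smul, norm_inv, norm_norm, ← hLdef, inv_mul_cancel₀ hL.ne']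
  have hL2 : L ^ 2 = n ^ 2 + R ^ 2 - 2 * b := by
    rw [hLdef, norm_sub_sq_real, hx, real_inner_comm, ← hndef, ← hbdef]
    ring
  have ha : L * a = n ^ 2 - b := by
    rw [hadef, hθ, real_inner_smul_left, inner_sub_left, real_inner_self_eq_norm_sq,
      ← hndef, ← hbdef, mul_inv_cancel_left₀ hL.ne']
  -- quadratic equations
  have key : ∀ s : ℝ, ‖r + s • θ‖ = R → s ^ 2 + 2 * a * s + (n ^ 2 - R ^ 2) = 0 := by
    intro s h
    have h2 : ‖r + s • θ‖ ^ 2 = R ^ 2 := by rw [h]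
    rw [norm_add_sq_real, norm_smul, hθn, real_inner_smul_right, real_inner_comm,
      ← hadef, ← hndef] at h2
    simp only [mul_one, Real.norm_eq_abs, sq_abs] at h2
    linarith
  have hq1 := key s₁ h₁
  have hq2 := key s₂ h₂
  have hsum : s₁ + s₂ = -(2 * a) := by
    have hfac : (s₁ - s₂) * (s₁ + s₂ + 2 * a) = 0 := by linear_combination hq1 - hq2
    rcases mul_eq_zero.mp hfac with h | h
    · exact absurd (sub_eq_zero.mp h) hs
    · linarith
  have hprod : s₁ * s₂ = n ^ 2 - R ^ 2 := by linear_combination s₁ * hsum - hq1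
  -- inner products with the normal
  have hinner : ∀ s : ℝ, (inner ℝ θ (R⁻¹ • (r + s • θ)) : ℝ) = R⁻¹ * (a + s) := by
    intro s
    rw [real_inner_smul_right, inner_add_right, real_inner_smul_right,
      real_inner_self_eq_norm_sq, hθn, ← hadef]
    ring
  -- cosine
  have hc : R * L * Real.cos φ = R ^ 2 - b := by
    rw [hφ, InnerProductGeometry.cos_angle, zero_sub, norm_neg, hx, ← hLdef,
      inner_neg_left, inner_sub_right, real_inner_self_eq_norm_sq, hx, ← hbdef]
    field_simp
    ring
  have hRc : R * Real.cos φ = L - a := by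
    have h1 : L * (R * Real.cos φ) = L * (L - a) := by linear_combination hc - hL2 + ha
    exact mul_left_cancel₀ hL.ne' h1
  have h5 : (2 * (L - a)) ^ 2 = (s₁ - s₂) ^ 2 := by
    linear_combination 4 * hL2 - 8 * ha - hq1 - hq2 + (2 * a) * hsum + 2 * hprod
  have hd2 : 4 * R ^ 2 * Real.cos φ ^ 2 = (s₁ - s₂) ^ 2 := by
    linear_combination h5 + 4 * (R * Real.cos φ + L - a) * hRc
  have hd : s₁ - s₂ ≠ 0 := sub_ne_zero.mpr hs
  have hdabs : 0 < |s₁ - s₂| := abs_pos.mpr hd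
  have ha1 : a + s₁ = (s₁ - s₂) / 2 := by linarith [hsum]
  have ha2 : a + s₂ = -((s₁ - s₂) / 2) := by linarith [hsum]
  have habs : |Real.cos φ| = |s₁ - s₂| / (2 * R) := by
    have h1 : |2 * R * Real.cos φ| = |s₁ - s₂| := by
      rw [← Real.sqrt_sq_eq_abs, ← Real.sqrt_sq_eq_abs]
      congr 1
      linear_combination hd2
    rw [abs_mul, abs_of_pos (by linarith : (0:ℝ) < 2 * R)] at h1
    field_simp
    linarith
  have e1 : |(inner ℝ θ (R⁻¹ • (r + s₁ • θ)) : ℝ)| = |s₁ - s₂| / (2 * R) := by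
    rw [hinner s₁, ha1, abs_mul, abs_inv, abs_of_pos hR, abs_div, abs_two]
    ring
  have e2 : |(inner ℝ θ (R⁻¹ • (r + s₂ • θ)) : ℝ)| = |s₁ - s₂| / (2 * R) := by
    rw [hinner s₂, abs_mul, ha2, abs_neg, abs_inv, abs_of_pos hR, abs_div, abs_two]
    ring
  have hnum : (1 / 2 : ℝ) * (C * s₁ ^ 2 + C * s₂ ^ 2) =
      C * R ^ 2 * (2 * Real.cos φ ^ 2 - 1 + (n / R) ^ 2) := by
    have h7 : C * R ^ 2 * (2 * Real.cos φ ^ 2 - 1 + (n / R) ^ 2) =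
        C * (2 * R ^ 2 * Real.cos φ ^ 2 - R ^ 2 + n ^ 2) := by
      field_simp
    rw [h7]
    linear_combination (-(C / 2)) * hd2 + C * hprod
  rw [e1, e2, habs, Real.cos_two_mul]
  have expand : (1 / 2 : ℝ) * (C * s₁ ^ 2 / (|s₁ - s₂| / (2 * R)) +
      C * s₂ ^ 2 / (|s₁ - s₂| / (2 * R))) =
      ((1 / 2 : ℝ) * (C * s₁ ^ 2 + C * s₂ ^ 2)) / (|s₁ - s₂| / (2 * R)) := by
    ring
  rw [expand, hnum]
end

section
/- Cylindrical source locus moment integral: let χ(ρ,φ,z) = C δ(ρ − R) be the uniform surface density on the infinite cylinder of radius R in ℝ³ (cylindrical coordinates), let r be a point with ρ-coordinate r_ρ < R, x a point on the cylinder, θ̂ the unit vector from x toward r with polar angle θ (from the z-axis); let θ_h be the angle at the horizontal projection of x between the horizontal projections of r − x and of −x. Then (1/2) ∫_{-∞}^{∞} s² χ(r + s θ̂) ds = C R² csc³θ · (cos(2θ_h) + (r_ρ/R)²) / |cos θ_h|. -/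
open MeasureTheory Real Set

set_option maxHeartbeats 1000000

private lemma sqeq {u v : ℝ} (hu : 0 ≤ u) (hv : 0 ≤ v) (h : u^2 = v^2) : u = v := by nlinarith

/-- cylindrical source locus moment integral.  For the uniform surface
density `χ = C δ(ρ - R)` on the infinite cylinder `{ρ = R}` in `ℝ³` (with `H` the
horizontal projection, so `ρ(v) = ‖H v‖`), a point `r` with `r_ρ < R`, a source point
`x` on the cylinder, `θ̂ = (r - x)/|r - x|` with polar angle `θ = arccos(θ̂_z)`
(not parallel to the `z`-axis), and `θ_h` the angle between the horizontal projections
of `r - x` and `-x`, the line meets the cylinder at two points `r + sᵢθ̂` and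
`(1/2)∫ s² χ(r + sθ̂) ds = Σᵢ C sᵢ²/(2|θ̂·n̂(xᵢ)|)` (with `n̂` the outward horizontal
unit normal) equals `C R² csc³θ (cos 2θ_h + (r_ρ/R)²)/|cos θ_h|`. -/
theorem stmt_16 (R C : ℝ) (hR : 0 < R) (hC : 0 < C)
    (H : EuclideanSpace ℝ (Fin 3) → EuclideanSpace ℝ (Fin 3))
    (hH : ∀ v i, H v i = if i = 2 then 0 else v i)
    (r x : EuclideanSpace ℝ (Fin 3)) (hr : ‖H r‖ < R) (hx : ‖H x‖ = R)
    (θv : EuclideanSpace ℝ (Fin 3)) (hθv : θv = ‖r - x‖⁻¹ • (r - x))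
    (hnz : |θv 2| < 1)
    (θ : ℝ) (hθ : θ = Real.arccos (θv 2))
    (θh : ℝ) (hθh : θh = InnerProductGeometry.angle (H (r - x)) (H ((0 : EuclideanSpace ℝ (Fin 3)) - x)))
    (s₁ s₂ : ℝ) (hs : s₁ ≠ s₂)
    (h₁ : ‖H (r + s₁ • θv)‖ = R) (h₂ : ‖H (r + s₂ • θv)‖ = R) :
    (1 / 2) * (C * s₁ ^ 2 / |(inner ℝ θv (R⁻¹ • H (r + s₁ • θv)) : ℝ)| +
        C * s₂ ^ 2 / |(inner ℝ θv (R⁻¹ • H (r + s₂ • θv)) : ℝ)|) =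
      C * R ^ 2 / (Real.sin θ) ^ 3 *
        ((Real.cos (2 * θh) + (‖H r‖ / R) ^ 2) / |Real.cos θh|) := by
  have hnormH : ∀ v : EuclideanSpace ℝ (Fin 3), ‖H v‖^2 = (v 0)^2 + (v 1)^2 := fun v => by
    rw [EuclideanSpace.norm_eq, Real.sq_sqrt (by positivity)]
    simp [hH, Fin.sum_univ_three, Real.norm_eq_abs, sq_abs]
  have hrx : r ≠ x := by
    intro h
    have hv0 : θv = 0 := by rw [hθv, h, sub_self]; simp
    rw [hv0] at h₁
    simp at h₁
    exact absurd h₁ (ne_of_lt hr)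
  have hL : 0 < ‖r - x‖ := norm_pos_iff.mpr (sub_ne_zero.mpr hrx)
  set L := ‖r - x‖ with hLdef
  have hcoord : ∀ i, x i = r i - L * θv i := by
    intro i
    have h1 : θv i = L⁻¹ * (r i - x i) := by rw [hθv]; simp
    rw [h1]; field_simp; ring
  have hunit : ‖θv‖ = 1 := by
    rw [hθv, norm_smul, norm_inv, norm_norm, inv_mul_cancel₀ hL.ne']
  have hunit2 : θv 0^2 + θv 1^2 + θv 2^2 = 1 := by
    have h1 : ‖θv‖^2 = 1 := by rw [hunit]; norm_num
    rw [EuclideanSpace.norm_eq, Real.sq_sqrt (by positivity)] at h1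
    simpa [Fin.sum_univ_three, Real.norm_eq_abs, sq_abs] using h1
  -- abbreviations
  set A := θv 0^2 + θv 1^2 with hAdef
  set B := θv 0 * r 0 + θv 1 * r 1 with hBdef
  set K := r 0^2 + r 1^2 - R^2 with hKdef
  have hA : 0 < A := by
    have h2 : θv 2 ^ 2 < 1 := by nlinarith [abs_nonneg (θv 2), sq_abs (θv 2)]
    rw [hAdef]; nlinarith [hunit2]
  have hKneg : K < 0 := by
    have := hnormH r
    rw [hKdef]; nlinarith [norm_nonneg (H r)]
  -- quadratic roots
  have root : ∀ s : ℝ, ‖H (r + s • θv)‖ = R → A*s^2 + 2*B*s + K = 0 := by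
    intro s h
    have h3 := hnormH (r + s • θv)
    rw [h] at h3
    simp only [PiLp.add_apply, PiLp.smul_apply, smul_eq_mul] at h3
    rw [hAdef, hBdef, hKdef]; linear_combination -h3
  have root₁ := root s₁ h₁
  have root₂ := root s₂ h₂
  have rootx : A*L^2 - 2*B*L + K = 0 := by
    have hx2 : x 0^2 + x 1^2 = R^2 := by
      have := hnormH x; rw [hx] at this; linarith
    rw [hcoord 0, hcoord 1] at hx2
    rw [hAdef, hBdef, hKdef]; linear_combination hx2
  -- Vieta
  have hd : s₁ - s₂ ≠ 0 := sub_ne_zero.mpr hs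
  have hsum : A*(s₁+s₂) = -2*B := by
    apply mul_left_cancel₀ hd
    linear_combination root₁ - root₂
  have hprod : A*(s₁*s₂) = K := by
    have h4 : A*s₂ = -2*B - A*s₁ := by linear_combination hsum
    linear_combination s₁ * h4 - root₁
  -- discriminant
  have hD : 0 < B^2 - A*K := by
    have h5 := mul_neg_of_pos_of_neg hA hKneg
    nlinarith [sq_nonneg B]
  set sD := Real.sqrt (B^2 - A*K) with hsDdef
  have hsD2 : sD^2 = B^2 - A*K := Real.sq_sqrt hD.le
  have hsDpos : 0 < sD := Real.sqrt_pos.mpr hD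
  set sa := Real.sqrt A with hsadef
  have hsa2 : sa^2 = A := Real.sq_sqrt hA.le
  have hsapos : 0 < sa := Real.sqrt_pos.mpr hA
  have hds : (A*(s₁-s₂))^2 = 4*(B^2 - A*K) := by
    linear_combination (A*(s₁+s₂) - 2*B)*hsum - 4*A*hprod
  have e₁ : 2*(B + A*s₁) = A*(s₁ - s₂) := by linear_combination hsum
  have e₂ : 2*(B + A*s₂) = -(A*(s₁ - s₂)) := by linear_combination hsum
  have sq₁ : (B + A*s₁)^2 = B^2 - A*K := by
    linear_combination ((2*(B+A*s₁) + A*(s₁-s₂))/4) * e₁ + (1/4)*hds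
  have sq₂ : (B + A*s₂)^2 = B^2 - A*K := by
    linear_combination ((2*(B+A*s₂) - A*(s₁-s₂))/4) * e₂ + (1/4)*hds
  have habs₁ : |B + A*s₁| = sD := by
    rw [← Real.sqrt_sq_eq_abs, sq₁, ← hsDdef]
  have habs₂ : |B + A*s₂| = sD := by
    rw [← Real.sqrt_sq_eq_abs, sq₂, ← hsDdef]
  have hLb : (L*A - B)^2 = B^2 - A*K := by linear_combination A*rootx
  -- inner products
  have hinner : ∀ s : ℝ, (inner ℝ θv (R⁻¹ • H (r + s • θv)) : ℝ) = (B + A*s)/R := by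
    intro s
    rw [real_inner_smul_right]
    simp [PiLp.inner_apply, RCLike.inner_apply, hH, Fin.sum_univ_three,
      PiLp.add_apply, PiLp.smul_apply, smul_eq_mul]
    rw [hAdef, hBdef]; field_simp; ring
  -- angle θh
  have hpq : (inner ℝ (H (r - x)) (H ((0 : EuclideanSpace ℝ (Fin 3)) - x)) : ℝ) = L*(L*A - B) := by
    simp [PiLp.inner_apply, RCLike.inner_apply, hH, Fin.sum_univ_three,
      PiLp.sub_apply, PiLp.zero_apply]
    rw [hcoord 0, hcoord 1, hAdef, hBdef]; ring
  have hnp : ‖H (r - x)‖ = L * sa := by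
    apply sqeq (norm_nonneg _) (by positivity)
    rw [hnormH]
    simp only [PiLp.sub_apply]
    rw [hcoord 0, hcoord 1]
    have h8 := hsa2
    rw [hAdef] at h8
    linear_combination -L^2 * h8
  have hnq : ‖H ((0 : EuclideanSpace ℝ (Fin 3)) - x)‖ = R := by
    apply sqeq (norm_nonneg _) hR.le
    rw [hnormH]
    simp only [PiLp.sub_apply, PiLp.zero_apply]
    have h6 := hnormH x
    rw [hx] at h6
    linear_combination -h6
  have hcos : Real.cos θh = (L*A - B)/(sa*R) := by
    rw [hθh, InnerProductGeometry.cos_angle, hpq, hnp, hnq]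
    field_simp
  have hcossq : Real.cos θh ^ 2 = (B^2 - A*K)/(A*R^2) := by
    rw [hcos]
    rw [div_pow, mul_pow, hLb, hsa2]
  have habscos : |Real.cos θh| = sD/(sa*R) := by
    rw [hcos, abs_div, abs_of_pos (by positivity : (0:ℝ) < sa*R),
      ← Real.sqrt_sq_eq_abs, hLb, ← hsDdef]
  have hsin : Real.sin θ = sa := by
    have h7 : 1 - θv 2^2 = A := by linear_combination -hunit2
    rw [hθ, Real.sin_arccos, h7]
  have hmR : (‖H r‖/R)^2 = (K + R^2)/R^2 := by
    rw [div_pow]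
    congr 1
    rw [hKdef]; linear_combination hnormH r
  -- final computation
  rw [hinner s₁, hinner s₂, abs_div, abs_div, abs_of_pos hR, habs₁, habs₂,
    hsin, Real.cos_two_mul, hcossq, habscos, hmR]
  have hss : A^2*(s₁^2+s₂^2) = 4*B^2-2*A*K := by
    linear_combination (A*(s₁+s₂) - 2*B)*hsum - 2*A*hprod
  have hLHS : (1/2)*(C*s₁^2/(sD/R)+C*s₂^2/(sD/R)) = C*R*(2*B^2-A*K)/(A^2*sD) := by
    field_simp
    linear_combination hss
  rw [hLHS]
  have hsa3 : sa^3 = A*sa := by linear_combination sa*hsa2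
  rw [hsa3]
  field_simp
  ring_nf
end
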